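/- Consider the multi-variant SEIR system with M ≥ 1, total population N > 0, parameters μ ≥ 0, η_i ≥ 0, γ_i ≥ 0, continuous transmission rates β_i : [0,∞) → [0, β_max] and continuous vaccination rate ν : [0,∞) → [0, ν_max], and nonnegative initial conditions S₀, E₀, I_{1,0}, …, I_{M,0}, R₀ ≥ 0 satisfying S₀ + E₀ + Σ_{i=1}^M I_{i,0} + R₀ = N. Then the system has at least one solution defined on all of [0,∞): there exist differentiable functions S, E, I_1, …, I_M, R : [0,∞) → ℝ satisfying the system for every t ≥ 0 and taking the given initial values at t = 0. -/

import Mathlib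

open Set


noncomputable def seirCl (N x : ℝ) : ℝ := max 0 (min x N)
lemma seirCl_nonneg (N x : ℝ) : 0 ≤ seirCl N x := le_max_left _ _
lemma seirCl_le (N x : ℝ) (hN : 0 ≤ N) : seirCl N x ≤ N := max_le hN (min_le_right _ _)
lemma seirCl_abs_le (N x : ℝ) (hN : 0 ≤ N) : |seirCl N x| ≤ N := by
  rw [abs_of_nonneg (seirCl_nonneg N x)]; exact seirCl_le N x hN
lemma seirCl_of_nonpos {N x : ℝ} (hx : x ≤ 0) (hN : 0 ≤ N) : seirCl N x = 0 := by
  unfold seirCl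
  rcases le_total x N with h | h
  · simp [min_eq_left h, max_eq_left hx]
  · simp [min_eq_right h, max_eq_left (h.trans hx)]
lemma seirCl_of_ge {N x : ℝ} (hx : N ≤ x) (hN : 0 ≤ N) : seirCl N x = N := by
  unfold seirCl; rw [min_eq_right hx, max_eq_right hN]
lemma seirCl_eq_self {N x : ℝ} (h0 : 0 ≤ x) (hN : x ≤ N) : seirCl N x = x := by
  unfold seirCl; rw [min_eq_left hN, max_eq_right h0]
lemma seirCl_dist (N a b : ℝ) : |seirCl N a - seirCl N b| ≤ |a - b| := by
  unfold seirCl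
  rw [max_comm 0 (min a N), max_comm 0 (min b N)]
  refine (abs_max_sub_max_le_abs _ _ _).trans ?_
  calc |min a N - min b N| ≤ max |a - b| |N - N| := abs_min_sub_min_le_max a N b N
    _ = |a - b| := by simp

section Main

variable (M : ℕ) (N μ : ℝ) (ηv γ : Fin M → ℝ) (β' : Fin M → ℝ → ℝ) (ν' : ℝ → ℝ)

noncomputable def seirF : ℝ → (ℝ × ℝ × ℝ × (Fin M → ℝ)) → (ℝ × ℝ × ℝ × (Fin M → ℝ)) :=
  fun t x =>
    (μ * N - seirCl N x.1 / N * (∑ i, β' i t * seirCl N (x.2.2.2 i))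
        - (ν' t + μ) * seirCl N x.1,
      seirCl N x.1 / N * (∑ i, β' i t * seirCl N (x.2.2.2 i))
        - ((∑ i, ηv i) + μ) * seirCl N x.2.1,
      (∑ i, γ i * seirCl N (x.2.2.2 i)) + ν' t * seirCl N x.1 - μ * seirCl N x.2.2.1,
      fun i => ηv i * seirCl N x.2.1 - (γ i + μ) * seirCl N (x.2.2.2 i))

variable {M N μ ηv γ β' ν'} {βmax νmax : ℝ}

lemma seirF_lipschitz (hN : 0 < N) (hμ : 0 ≤ μ) (hβmax : 0 ≤ βmax) (hνmax : 0 ≤ νmax)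
    (hηv : ∀ i, 0 ≤ ηv i) (hγ : ∀ i, 0 ≤ γ i)
    (hβb : ∀ i t, β' i t ∈ Icc 0 βmax) (hνb : ∀ t, ν' t ∈ Icc 0 νmax) (t : ℝ) :
    LipschitzWith (Real.toNNReal (2*M*βmax + νmax + (∑ i, ηv i) + (∑ i, γ i) + 2*μ))
      (seirF M N μ ηv γ β' ν' t) := by
  set η := ∑ i, ηv i with hηdef
  set Γ := ∑ i, γ i with hΓdef
  have hη : 0 ≤ η := Finset.sum_nonneg fun i _ => hηv i
  have hΓ : 0 ≤ Γ := Finset.sum_nonneg fun i _ => hγ i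
  have hM : (0:ℝ) ≤ M := Nat.cast_nonneg M
  set Krl : ℝ := 2*M*βmax + νmax + η + Γ + 2*μ with hKdef
  have hMb : (0:ℝ) ≤ 2*M*βmax := by positivity
  have hKrl : 0 ≤ Krl := by positivity
  refine LipschitzWith.of_dist_le_mul fun x y => ?_
  rw [Real.coe_toNNReal _ hKrl]
  set d := dist x y with hd
  have hd0 : 0 ≤ d := dist_nonneg
  have hdS : |seirCl N x.1 - seirCl N y.1| ≤ d := by
    refine (seirCl_dist _ _ _).trans ?_
    rw [← Real.dist_eq]
    rw [hd, Prod.dist_eq]; exact le_max_left _ _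
  have hdE : |seirCl N x.2.1 - seirCl N y.2.1| ≤ d := by
    refine (seirCl_dist _ _ _).trans ?_
    rw [← Real.dist_eq]
    calc dist x.2.1 y.2.1 ≤ dist x.2 y.2 := by rw [Prod.dist_eq]; exact le_max_left _ _
      _ ≤ d := by rw [hd, Prod.dist_eq]; exact le_max_right _ _
  have hdR : |seirCl N x.2.2.1 - seirCl N y.2.2.1| ≤ d := by
    refine (seirCl_dist _ _ _).trans ?_
    rw [← Real.dist_eq]
    calc dist x.2.2.1 y.2.2.1 ≤ dist x.2.2 y.2.2 := by rw [Prod.dist_eq]; exact le_max_left _ _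
      _ ≤ dist x.2 y.2 := by rw [Prod.dist_eq]; exact le_max_right _ _
      _ ≤ d := by rw [hd, Prod.dist_eq]; exact le_max_right _ _
  have hdI : ∀ i, |seirCl N (x.2.2.2 i) - seirCl N (y.2.2.2 i)| ≤ d := by
    intro i
    refine (seirCl_dist _ _ _).trans ?_
    rw [← Real.dist_eq]
    calc dist (x.2.2.2 i) (y.2.2.2 i) ≤ dist x.2.2.2 y.2.2.2 := dist_le_pi_dist _ _ i
      _ ≤ dist x.2.2 y.2.2 := by rw [Prod.dist_eq]; exact le_max_right _ _
      _ ≤ dist x.2 y.2 := by rw [Prod.dist_eq]; exact le_max_right _ _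
      _ ≤ d := by rw [hd, Prod.dist_eq]; exact le_max_right _ _
  have hPabs : ∀ z : ℝ × ℝ × ℝ × (Fin M → ℝ),
      |∑ i, β' i t * seirCl N (z.2.2.2 i)| ≤ M * βmax * N := by
    intro z
    refine (Finset.abs_sum_le_sum_abs _ _).trans ?_
    have h1 : ∀ i ∈ Finset.univ, |β' i t * seirCl N (z.2.2.2 i)| ≤ βmax * N := by
      intro i _
      rw [abs_mul]
      exact mul_le_mul (by rw [abs_of_nonneg (hβb i t).1]; exact (hβb i t).2)
        (seirCl_abs_le _ _ hN.le) (abs_nonneg _) hβmax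
    refine (Finset.sum_le_sum h1).trans ?_
    rw [Finset.sum_const, Finset.card_univ, Fintype.card_fin, nsmul_eq_mul]
    exact le_of_eq (by ring)
  have hPdiff : |(∑ i, β' i t * seirCl N (x.2.2.2 i)) - ∑ i, β' i t * seirCl N (y.2.2.2 i)|
      ≤ M * βmax * d := by
    rw [← Finset.sum_sub_distrib]
    refine (Finset.abs_sum_le_sum_abs _ _).trans ?_
    have h1 : ∀ i ∈ Finset.univ,
        |β' i t * seirCl N (x.2.2.2 i) - β' i t * seirCl N (y.2.2.2 i)| ≤ βmax * d := by
      intro i _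
      rw [← mul_sub, abs_mul]
      exact mul_le_mul (by rw [abs_of_nonneg (hβb i t).1]; exact (hβb i t).2)
        (hdI i) (abs_nonneg _) hβmax
    refine (Finset.sum_le_sum h1).trans ?_
    rw [Finset.sum_const, Finset.card_univ, Fintype.card_fin, nsmul_eq_mul]
    exact le_of_eq (by ring)
  have hquad : |seirCl N x.1 / N * (∑ i, β' i t * seirCl N (x.2.2.2 i))
      - seirCl N y.1 / N * (∑ i, β' i t * seirCl N (y.2.2.2 i))| ≤ 2*M*βmax*d := by
    have h1 : seirCl N x.1 / N * (∑ i, β' i t * seirCl N (x.2.2.2 i))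
        - seirCl N y.1 / N * (∑ i, β' i t * seirCl N (y.2.2.2 i))
        = ((seirCl N x.1 - seirCl N y.1) * (∑ i, β' i t * seirCl N (x.2.2.2 i))
          + seirCl N y.1 * ((∑ i, β' i t * seirCl N (x.2.2.2 i))
              - ∑ i, β' i t * seirCl N (y.2.2.2 i))) / N := by
      field_simp; ring
    rw [h1, abs_div, abs_of_pos hN, div_le_iff₀ hN]
    calc |(seirCl N x.1 - seirCl N y.1) * (∑ i, β' i t * seirCl N (x.2.2.2 i))
          + seirCl N y.1 * ((∑ i, β' i t * seirCl N (x.2.2.2 i))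
              - ∑ i, β' i t * seirCl N (y.2.2.2 i))|
        ≤ |(seirCl N x.1 - seirCl N y.1) * (∑ i, β' i t * seirCl N (x.2.2.2 i))|
          + |seirCl N y.1 * ((∑ i, β' i t * seirCl N (x.2.2.2 i))
              - ∑ i, β' i t * seirCl N (y.2.2.2 i))| := abs_add_le _ _
      _ = |seirCl N x.1 - seirCl N y.1| * |∑ i, β' i t * seirCl N (x.2.2.2 i)|
          + |seirCl N y.1| * |(∑ i, β' i t * seirCl N (x.2.2.2 i))
              - ∑ i, β' i t * seirCl N (y.2.2.2 i)| := by rw [abs_mul, abs_mul]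
      _ ≤ d * (M * βmax * N) + N * (M * βmax * d) := by
          refine add_le_add (mul_le_mul hdS (hPabs x) (abs_nonneg _) hd0)
            (mul_le_mul (seirCl_abs_le _ _ hN.le) hPdiff (abs_nonneg _) hN.le)
      _ = 2*M*βmax*d*N := by ring
  have hν't := hνb t
  have hνabs : |ν' t + μ| ≤ νmax + μ := by
    rw [abs_of_nonneg (by linarith [hν't.1])]; linarith [hν't.2]
  rw [Prod.dist_eq, Prod.dist_eq, Prod.dist_eq]
  refine max_le ?_ (max_le ?_ (max_le ?_ ?_))
  · -- S component
    rw [Real.dist_eq]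
    have he : (seirF M N μ ηv γ β' ν' t x).1 - (seirF M N μ ηv γ β' ν' t y).1
        = -(seirCl N x.1 / N * (∑ i, β' i t * seirCl N (x.2.2.2 i))
            - seirCl N y.1 / N * (∑ i, β' i t * seirCl N (y.2.2.2 i)))
          - (ν' t + μ) * (seirCl N x.1 - seirCl N y.1) := by
      simp only [seirF]; ring
    rw [he]
    refine (abs_sub _ _).trans ?_
    rw [abs_neg, abs_mul]
    have h2 : |ν' t + μ| * |seirCl N x.1 - seirCl N y.1| ≤ (νmax + μ) * d :=
      mul_le_mul hνabs hdS (abs_nonneg _) (by linarith)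
    have h3 : (2*M*βmax)*d + (νmax + μ) * d ≤ Krl * d := by
      calc (2*(M:ℝ)*βmax)*d + (νmax + μ)*d = (2*M*βmax + (νmax+μ))*d := by ring
        _ ≤ Krl * d := mul_le_mul_of_nonneg_right (by rw [hKdef]; linarith) hd0
    exact le_trans (add_le_add hquad h2) h3
  · -- E component
    rw [Real.dist_eq]
    have he : (seirF M N μ ηv γ β' ν' t x).2.1 - (seirF M N μ ηv γ β' ν' t y).2.1
        = (seirCl N x.1 / N * (∑ i, β' i t * seirCl N (x.2.2.2 i))
            - seirCl N y.1 / N * (∑ i, β' i t * seirCl N (y.2.2.2 i)))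
          - (η + μ) * (seirCl N x.2.1 - seirCl N y.2.1) := by
      simp only [seirF, hηdef]; ring
    rw [he]
    refine (abs_sub _ _).trans ?_
    rw [abs_mul]
    have h2 : |η + μ| * |seirCl N x.2.1 - seirCl N y.2.1| ≤ (η + μ) * d :=
      mul_le_mul (le_of_eq (abs_of_nonneg (by linarith))) hdE (abs_nonneg _) (by linarith)
    have h3 : (2*M*βmax)*d + (η + μ) * d ≤ Krl * d := by
      calc (2*M*βmax)*d + (η + μ)*d = (2*M*βmax + (η+μ))*d := by ring
        _ ≤ Krl * d := mul_le_mul_of_nonneg_right (by rw [hKdef]; linarith) hd0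
    exact le_trans (add_le_add hquad h2) h3
  · -- R component
    rw [Real.dist_eq]
    have he : (seirF M N μ ηv γ β' ν' t x).2.2.1 - (seirF M N μ ηv γ β' ν' t y).2.2.1
        = (∑ i, γ i * (seirCl N (x.2.2.2 i) - seirCl N (y.2.2.2 i)))
          + ν' t * (seirCl N x.1 - seirCl N y.1)
          - μ * (seirCl N x.2.2.1 - seirCl N y.2.2.1) := by
      simp only [seirF, mul_sub, Finset.sum_sub_distrib]; ring
    rw [he]
    have hsum : |∑ i, γ i * (seirCl N (x.2.2.2 i) - seirCl N (y.2.2.2 i))| ≤ Γ * d := by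
      refine (Finset.abs_sum_le_sum_abs _ _).trans ?_
      have h1 : ∀ i ∈ Finset.univ,
          |γ i * (seirCl N (x.2.2.2 i) - seirCl N (y.2.2.2 i))| ≤ γ i * d := by
        intro i _
        rw [abs_mul, abs_of_nonneg (hγ i)]
        exact mul_le_mul_of_nonneg_left (hdI i) (hγ i)
      refine (Finset.sum_le_sum h1).trans ?_
      rw [hΓdef, ← Finset.sum_mul]
    have h2 : |ν' t * (seirCl N x.1 - seirCl N y.1)| ≤ νmax * d := by
      rw [abs_mul]
      exact mul_le_mul (by rw [abs_of_nonneg hν't.1]; exact hν't.2) hdS (abs_nonneg _) hνmax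
    have h3 : |μ * (seirCl N x.2.2.1 - seirCl N y.2.2.1)| ≤ μ * d := by
      rw [abs_mul, abs_of_nonneg hμ]
      exact mul_le_mul_of_nonneg_left hdR hμ
    have h4 : Γ*d + νmax*d + μ*d ≤ Krl * d := by
      calc Γ*d + νmax*d + μ*d = (Γ + νmax + μ)*d := by ring
        _ ≤ Krl * d := mul_le_mul_of_nonneg_right (by rw [hKdef]; linarith) hd0
    calc |∑ i, γ i * (seirCl N (x.2.2.2 i) - seirCl N (y.2.2.2 i))
          + ν' t * (seirCl N x.1 - seirCl N y.1)
          - μ * (seirCl N x.2.2.1 - seirCl N y.2.2.1)|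
        ≤ |∑ i, γ i * (seirCl N (x.2.2.2 i) - seirCl N (y.2.2.2 i))
          + ν' t * (seirCl N x.1 - seirCl N y.1)|
          + |μ * (seirCl N x.2.2.1 - seirCl N y.2.2.1)| := abs_sub _ _
      _ ≤ |∑ i, γ i * (seirCl N (x.2.2.2 i) - seirCl N (y.2.2.2 i))|
          + |ν' t * (seirCl N x.1 - seirCl N y.1)|
          + |μ * (seirCl N x.2.2.1 - seirCl N y.2.2.1)| := by
            linarith [abs_add_le (∑ i, γ i * (seirCl N (x.2.2.2 i) - seirCl N (y.2.2.2 i)))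
              (ν' t * (seirCl N x.1 - seirCl N y.1))]
      _ ≤ Krl * d := le_trans (by linarith [hsum, h2, h3]) h4
  · -- I components
    refine (dist_pi_le_iff (by positivity)).mpr fun i => ?_
    rw [Real.dist_eq]
    have he : (seirF M N μ ηv γ β' ν' t x).2.2.2 i - (seirF M N μ ηv γ β' ν' t y).2.2.2 i
        = ηv i * (seirCl N x.2.1 - seirCl N y.2.1)
          - (γ i + μ) * (seirCl N (x.2.2.2 i) - seirCl N (y.2.2.2 i)) := by
      simp only [seirF]; ring
    rw [he]
    refine (abs_sub _ _).trans ?_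
    rw [abs_mul, abs_mul]
    have h1 : |ηv i| * |seirCl N x.2.1 - seirCl N y.2.1| ≤ η * d := by
      refine mul_le_mul ?_ hdE (abs_nonneg _) hη
      rw [abs_of_nonneg (hηv i), hηdef]
      exact Finset.single_le_sum (fun j _ => hηv j) (Finset.mem_univ i)
    have h2 : |γ i + μ| * |seirCl N (x.2.2.2 i) - seirCl N (y.2.2.2 i)| ≤ (Γ + μ) * d := by
      refine mul_le_mul ?_ (hdI i) (abs_nonneg _) (by linarith)
      rw [abs_of_nonneg (by linarith [hγ i])]
      have : γ i ≤ Γ := by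
        rw [hΓdef]; exact Finset.single_le_sum (fun j _ => hγ j) (Finset.mem_univ i)
      linarith
    have h3 : η*d + (Γ+μ)*d ≤ Krl * d := by
      calc η*d + (Γ+μ)*d = (η + (Γ+μ))*d := by ring
        _ ≤ Krl * d := mul_le_mul_of_nonneg_right (by rw [hKdef]; linarith) hd0
    exact le_trans (add_le_add h1 h2) h3

end Main

section Main2
variable {M : ℕ} {N μ : ℝ} {ηv γ : Fin M → ℝ} {β' : Fin M → ℝ → ℝ} {ν' : ℝ → ℝ} {βmax νmax : ℝ}

lemma seirP_abs (hN : 0 < N) (hβmax : 0 ≤ βmax) (hβb : ∀ i t, β' i t ∈ Icc 0 βmax)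
    (t : ℝ) (z : Fin M → ℝ) : |∑ i, β' i t * seirCl N (z i)| ≤ M * βmax * N := by
  refine (Finset.abs_sum_le_sum_abs _ _).trans ?_
  have h1 : ∀ i ∈ Finset.univ, |β' i t * seirCl N (z i)| ≤ βmax * N := by
    intro i _
    rw [abs_mul]
    exact mul_le_mul (by rw [abs_of_nonneg (hβb i t).1]; exact (hβb i t).2)
      (seirCl_abs_le _ _ hN.le) (abs_nonneg _) hβmax
  refine (Finset.sum_le_sum h1).trans ?_
  rw [Finset.sum_const, Finset.card_univ, Fintype.card_fin, nsmul_eq_mul]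
  exact le_of_eq (by ring)

lemma seirF_bound (hN : 0 < N) (hμ : 0 ≤ μ) (hβmax : 0 ≤ βmax) (hνmax : 0 ≤ νmax)
    (hηv : ∀ i, 0 ≤ ηv i) (hγ : ∀ i, 0 ≤ γ i)
    (hβb : ∀ i t, β' i t ∈ Icc 0 βmax) (hνb : ∀ t, ν' t ∈ Icc 0 νmax)
    (t : ℝ) (x : ℝ × ℝ × ℝ × (Fin M → ℝ)) :
    ‖seirF M N μ ηv γ β' ν' t x‖
      ≤ (2*μ + M*βmax + νmax + (∑ i, ηv i) + (∑ i, γ i)) * N := by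
  set η := ∑ i, ηv i with hηdef
  set Γ := ∑ i, γ i with hΓdef
  have hη : 0 ≤ η := Finset.sum_nonneg fun i _ => hηv i
  have hΓ : 0 ≤ Γ := Finset.sum_nonneg fun i _ => hγ i
  have hM : (0:ℝ) ≤ M := Nat.cast_nonneg M
  have hν't := hνb t
  have hq : |seirCl N x.1 / N * (∑ i, β' i t * seirCl N (x.2.2.2 i))| ≤ M * βmax * N := by
    rw [abs_mul, abs_div, abs_of_pos hN]
    have h1 : |seirCl N x.1| / N ≤ 1 := by
      rw [div_le_one hN]; exact seirCl_abs_le _ _ hN.le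
    calc |seirCl N x.1| / N * |∑ i, β' i t * seirCl N (x.2.2.2 i)|
        ≤ 1 * (M * βmax * N) :=
          mul_le_mul h1 (seirP_abs hN hβmax hβb t _) (abs_nonneg _) zero_le_one
      _ = M * βmax * N := one_mul _
  have hsumγ : |∑ i, γ i * seirCl N (x.2.2.2 i)| ≤ Γ * N := by
    refine (Finset.abs_sum_le_sum_abs _ _).trans ?_
    have h1 : ∀ i ∈ Finset.univ, |γ i * seirCl N (x.2.2.2 i)| ≤ γ i * N := by
      intro i _
      rw [abs_mul, abs_of_nonneg (hγ i)]
      exact mul_le_mul_of_nonneg_left (seirCl_abs_le _ _ hN.le) (hγ i)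
    refine (Finset.sum_le_sum h1).trans ?_
    rw [hΓdef, ← Finset.sum_mul]
  rw [Prod.norm_def, Prod.norm_def, Prod.norm_def]
  refine max_le ?_ (max_le ?_ (max_le ?_ ?_))
  · rw [Real.norm_eq_abs]
    show |μ * N - seirCl N x.1 / N * (∑ i, β' i t * seirCl N (x.2.2.2 i))
      - (ν' t + μ) * seirCl N x.1| ≤ _
    have h2 : |(ν' t + μ) * seirCl N x.1| ≤ (νmax + μ) * N := by
      rw [abs_mul]
      exact mul_le_mul (by rw [abs_of_nonneg (by linarith [hν't.1])]; linarith [hν't.2])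
        (seirCl_abs_le _ _ hN.le) (abs_nonneg _) (by linarith)
    have h0 : |μ * N| = μ * N := abs_of_nonneg (by positivity)
    have := abs_sub (μ * N - seirCl N x.1 / N * (∑ i, β' i t * seirCl N (x.2.2.2 i)))
      ((ν' t + μ) * seirCl N x.1)
    have h1 := abs_sub (μ * N) (seirCl N x.1 / N * (∑ i, β' i t * seirCl N (x.2.2.2 i)))
    nlinarith [hq, h2]
  · rw [Real.norm_eq_abs]
    show |seirCl N x.1 / N * (∑ i, β' i t * seirCl N (x.2.2.2 i))
      - (η + μ) * seirCl N x.2.1| ≤ _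
    have h2 : |(η + μ) * seirCl N x.2.1| ≤ (η + μ) * N := by
      rw [abs_mul, abs_of_nonneg (by linarith)]
      exact mul_le_mul_of_nonneg_left (seirCl_abs_le _ _ hN.le) (by linarith)
    have := abs_sub (seirCl N x.1 / N * (∑ i, β' i t * seirCl N (x.2.2.2 i)))
      ((η + μ) * seirCl N x.2.1)
    nlinarith [hq]
  · rw [Real.norm_eq_abs]
    show |(∑ i, γ i * seirCl N (x.2.2.2 i)) + ν' t * seirCl N x.1 - μ * seirCl N x.2.2.1| ≤ _
    have h2 : |ν' t * seirCl N x.1| ≤ νmax * N := by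
      rw [abs_mul]
      exact mul_le_mul (by rw [abs_of_nonneg hν't.1]; exact hν't.2)
        (seirCl_abs_le _ _ hN.le) (abs_nonneg _) hνmax
    have h3 : |μ * seirCl N x.2.2.1| ≤ μ * N := by
      rw [abs_mul, abs_of_nonneg hμ]
      exact mul_le_mul_of_nonneg_left (seirCl_abs_le _ _ hN.le) hμ
    have h4 := abs_sub ((∑ i, γ i * seirCl N (x.2.2.2 i)) + ν' t * seirCl N x.1)
      (μ * seirCl N x.2.2.1)
    have h5 := abs_add_le (∑ i, γ i * seirCl N (x.2.2.2 i)) (ν' t * seirCl N x.1)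
    nlinarith [mul_nonneg (mul_nonneg hM hβmax) hN.le, mul_nonneg hη hN.le, mul_nonneg hΓ hN.le, mul_nonneg hμ hN.le, mul_nonneg hνmax hN.le, hsumγ]
  · refine (pi_norm_le_iff_of_nonneg (by positivity)).mpr fun i => ?_
    rw [Real.norm_eq_abs]
    show |ηv i * seirCl N x.2.1 - (γ i + μ) * seirCl N (x.2.2.2 i)| ≤ _
    have h1 : |ηv i * seirCl N x.2.1| ≤ η * N := by
      rw [abs_mul, abs_of_nonneg (hηv i)]
      refine mul_le_mul ?_ (seirCl_abs_le _ _ hN.le) (abs_nonneg _) hη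
      rw [hηdef]; exact Finset.single_le_sum (fun j _ => hηv j) (Finset.mem_univ i)
    have h2 : |(γ i + μ) * seirCl N (x.2.2.2 i)| ≤ (Γ + μ) * N := by
      rw [abs_mul, abs_of_nonneg (by linarith [hγ i])]
      refine mul_le_mul ?_ (seirCl_abs_le _ _ hN.le) (abs_nonneg _) (by linarith)
      have : γ i ≤ Γ := by
        rw [hΓdef]; exact Finset.single_le_sum (fun j _ => hγ j) (Finset.mem_univ i)
      linarith
    have := abs_sub (ηv i * seirCl N x.2.1) ((γ i + μ) * seirCl N (x.2.2.2 i))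
    nlinarith [mul_nonneg (mul_nonneg hM hβmax) hN.le, mul_nonneg hη hN.le, mul_nonneg hΓ hN.le, mul_nonneg hμ hN.le, mul_nonneg hνmax hN.le]

lemma seirF_cont (hβ'c : ∀ i, Continuous (β' i)) (hν'c : Continuous ν')
    (x : ℝ × ℝ × ℝ × (Fin M → ℝ)) :
    Continuous fun t => seirF M N μ ηv γ β' ν' t x := by
  unfold seirF
  have hsum : Continuous fun t => ∑ i, β' i t * seirCl N (x.2.2.2 i) :=
    continuous_finset_sum _ fun i _ => (hβ'c i).mul continuous_const
  refine Continuous.prodMk ?_ (Continuous.prodMk ?_ (Continuous.prodMk ?_ ?_))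
  · exact (continuous_const.sub (continuous_const.mul hsum)).sub
      ((hν'c.add continuous_const).mul continuous_const)
  · exact (continuous_const.mul hsum).sub continuous_const
  · exact (continuous_const.add (hν'c.mul continuous_const)).sub continuous_const
  · exact continuous_const

end Main2

lemma seir_nonneg_invariant (u u' : ℝ → ℝ) (hu : ∀ t, HasDerivAt u (u' t) t)
    (h0 : 0 ≤ u 0) (hpos : ∀ t ≥ (0:ℝ), u t < 0 → 0 ≤ u' t) :
    ∀ t ≥ (0:ℝ), 0 ≤ u t := by
  have hcont : Continuous u := by
    rw [continuous_iff_continuousAt]; exact fun t => (hu t).continuousAt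
  intro t₁ ht₁
  by_contra hneg
  push_neg at hneg
  have ht₁0 : (0:ℝ) < t₁ := by
    rcases eq_or_lt_of_le ht₁ with h | h
    · exfalso; rw [← h] at hneg; linarith
    · exact h
  set A : Set ℝ := Icc 0 t₁ ∩ u ⁻¹' Ici 0 with hA
  have hAne : A.Nonempty := ⟨0, ⟨le_rfl, le_of_lt ht₁0⟩, h0⟩
  have hAbdd : BddAbove A := ⟨t₁, fun t ht => ht.1.2⟩
  have hAclosed : IsClosed A := isClosed_Icc.inter (isClosed_Ici.preimage hcont)
  set t₀ := sSup A with ht₀def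
  have ht₀A : t₀ ∈ A := hAclosed.csSup_mem hAne hAbdd
  have ht₀u : 0 ≤ u t₀ := ht₀A.2
  have ht₀mem : t₀ ∈ Icc 0 t₁ := ht₀A.1
  have ht₀lt : t₀ < t₁ := lt_of_le_of_ne ht₀mem.2 (by
    intro h; rw [h] at ht₀u; linarith)
  have hltneg : ∀ s ∈ Ioc t₀ t₁, u s < 0 := by
    intro s hs
    by_contra hnn
    push_neg at hnn
    have : s ∈ A := ⟨⟨ht₀mem.1.trans hs.1.le, hs.2⟩, hnn⟩
    exact absurd (le_csSup hAbdd this) (not_le.mpr hs.1)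
  obtain ⟨ξ, hξ, hξeq⟩ := exists_hasDerivAt_eq_slope u u' ht₀lt
    (hcont.continuousOn) (fun s _ => hu s)
  have hξneg : u ξ < 0 := hltneg ξ ⟨hξ.1, hξ.2.le⟩
  have hξ0 : (0:ℝ) ≤ ξ := ht₀mem.1.trans hξ.1.le
  have := hpos ξ hξ0 hξneg
  rw [hξeq] at this
  have : 0 ≤ u t₁ - u t₀ := by
    have hpos' : 0 < t₁ - t₀ := by linarith
    have := mul_nonneg this hpos'.le
    calc (0:ℝ) ≤ (u t₁ - u t₀) / (t₁ - t₀) * (t₁ - t₀) := this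
      _ = u t₁ - u t₀ := div_mul_cancel₀ _ (ne_of_gt hpos')
  linarith

lemma seir_zero_invariant (u u' : ℝ → ℝ) (hu : ∀ t, HasDerivAt u (u' t) t)
    (h0 : u 0 = 0) (hpos : ∀ t ≥ (0:ℝ), u t < 0 → 0 ≤ u' t)
    (hneg : ∀ t ≥ (0:ℝ), 0 < u t → u' t ≤ 0) :
    ∀ t ≥ (0:ℝ), u t = 0 := by
  intro t ht
  have h1 := seir_nonneg_invariant u u' hu (le_of_eq h0.symm) hpos t ht
  have h2 := seir_nonneg_invariant (fun s => -u s) (fun s => -u' s)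
    (fun s => (hu s).neg) (by simp [h0]) (fun s hs hlt => by
      simp only [neg_nonneg]
      exact hneg s hs (by simpa using hlt)) t ht
  simp only [neg_nonneg] at h2
  linarith


lemma seir_ode_global {V : Type*} [NormedAddCommGroup V] [NormedSpace ℝ V] [CompleteSpace V]
    (F : ℝ → V → V) (K : NNReal) (C : ℝ) (hC : 0 ≤ C)
    (hlip : ∀ t, LipschitzWith K (F t))
    (hcont : ∀ x, Continuous fun t => F t x)
    (hbdd : ∀ t x, ‖F t x‖ ≤ C) (x₀ : V) :
    ∃ X : ℝ → V, X 0 = x₀ ∧ ∀ t, HasDerivAt X (F t (X t)) t := by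
  have hsol : ∀ n : ℕ, ∃ f : ℝ → V, f 0 = x₀ ∧
      ∀ t ∈ Icc (-(n+1):ℝ) (n+1), HasDerivWithinAt f (F t (f t)) (Icc (-(n+1):ℝ) (n+1)) t := by
    intro n
    have hn : (0:ℝ) ≤ n := Nat.cast_nonneg n
    have h0mem' : (0:ℝ) ∈ Icc (-(n+1):ℝ) (n+1) := ⟨by linarith, by linarith⟩
    have hpl : IsPicardLindelof F (tmin := (-(n+1):ℝ)) (tmax := ((n+1):ℝ)) ⟨0, h0mem'⟩ x₀
        (C * (n+1)).toNNReal 0 C.toNNReal K := by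
      constructor
      · exact fun t _ => (hlip t).lipschitzOnWith
      · exact fun x _ => (hcont x).continuousOn
      · intro t _ x _; rw [Real.coe_toNNReal _ hC]; exact hbdd t x
      · simp only [NNReal.coe_zero, tsub_zero, sub_zero, zero_sub, neg_neg, max_self,
          Real.coe_toNNReal _ hC, Real.coe_toNNReal _ (by positivity : (0:ℝ) ≤ C * (n+1)), le_refl]
    exact hpl.exists_eq_forall_mem_Icc_hasDerivWithinAt₀
  choose f hf0 hf using hsol
  have hderiv : ∀ n : ℕ, ∀ t : ℝ, |t| < n + 1 → HasDerivAt (f n) (F t (f n t)) t := by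
    intro n t ht
    rw [abs_lt] at ht
    have h1 : t ∈ Icc (-(n+1):ℝ) (n+1) := ⟨by linarith [ht.1], by linarith [ht.2]⟩
    exact (hf n t h1).hasDerivAt (Icc_mem_nhds (by linarith [ht.1]) (by linarith [ht.2]))
  have hcompat : ∀ n m : ℕ, n ≤ m → ∀ t : ℝ, |t| < n + 1 → f n t = f m t := by
    intro n m hnm t ht
    have hnm' : (n:ℝ) + 1 ≤ (m:ℝ) + 1 := by
      have : (n:ℝ) ≤ m := Nat.cast_le.mpr hnm
      linarith
    have h0mem : (0:ℝ) ∈ Ioo (-(n+1):ℝ) (n+1) := by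
      have hn : (0:ℝ) ≤ n := Nat.cast_nonneg n
      constructor <;> [linarith; linarith]
    refine ODE_solution_unique_of_mem_Ioo (v := F) (s := fun _ => (univ : Set V))
      (K := K) (f := f n) (g := f m) (t₀ := 0)
      (fun t _ => (hlip t).lipschitzOnWith) h0mem
      (fun s hs => ⟨hderiv n s (abs_lt.mpr ⟨hs.1, hs.2⟩), trivial⟩)
      (fun s hs => ⟨hderiv m s (lt_of_lt_of_le (abs_lt.mpr ⟨hs.1, hs.2⟩) hnm'), trivial⟩)
      (by rw [hf0, hf0]) (abs_lt.mp ht |> fun h => ⟨h.1, h.2⟩)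
  refine ⟨fun t => f ⌈|t|⌉₊ t, by simpa using hf0 0, fun t => ?_⟩
  set n := ⌈|t|⌉₊ with hn
  have htn : |t| < n + 1 := lt_of_le_of_lt (Nat.le_ceil _) (by
    have : ((⌈|t|⌉₊ : ℝ)) < ⌈|t|⌉₊ + 1 := by linarith
    exact this)
  have hagree : ∀ s ∈ Ioo (-(n+1):ℝ) (n+1), f ⌈|s|⌉₊ s = f n s := by
    intro s hs
    have hsn : |s| < n + 1 := abs_lt.mpr ⟨hs.1, hs.2⟩
    have hsc : |s| < (⌈|s|⌉₊:ℝ) + 1 := lt_of_le_of_lt (Nat.le_ceil _) (by linarith)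
    rcases le_total (⌈|s|⌉₊ : ℕ) n with h | h
    · exact hcompat _ _ h s hsc
    · exact (hcompat _ _ h s hsn).symm
  have hmem : t ∈ Ioo (-(n+1):ℝ) (n+1) := by
    rw [abs_lt] at htn; exact ⟨htn.1, htn.2⟩
  have heq : (fun s => f ⌈|s|⌉₊ s) =ᶠ[nhds t] f n :=
    Filter.eventuallyEq_of_mem (isOpen_Ioo.mem_nhds hmem) hagree
  have hXt : f ⌈|t|⌉₊ t = f n t := hagree t hmem
  rw [show (fun s => f ⌈|s|⌉₊ s) t = f n t from hXt]
  exact (hderiv n t htn).congr_of_eventuallyEq heq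

section Helpers
variable {E F : Type*} [NormedAddCommGroup E] [NormedSpace ℝ E]
  [NormedAddCommGroup F] [NormedSpace ℝ F]

lemma seir_hasDerivAt_fst {f : ℝ → E × F} {d : E × F} {t : ℝ} (h : HasDerivAt f d t) :
    HasDerivAt (fun s => (f s).1) d.1 t := by
  exact ((ContinuousLinearMap.fst ℝ E F).hasFDerivAt (x := f t)).comp_hasDerivAt t h

lemma seir_hasDerivAt_snd {f : ℝ → E × F} {d : E × F} {t : ℝ} (h : HasDerivAt f d t) :
    HasDerivAt (fun s => (f s).2) d.2 t := by
  exact ((ContinuousLinearMap.snd ℝ E F).hasFDerivAt (x := f t)).comp_hasDerivAt t h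

end Helpers

/-- Global existence of a solution of the multi-variant SEIR system on `[0, ∞)`. -/
theorem seir_global_existence
    (M : ℕ) (hM : 1 ≤ M) (N μ βmax νmax : ℝ) (hN : 0 < N) (hμ : 0 ≤ μ)
    (hβmax : 0 ≤ βmax) (hνmax : 0 ≤ νmax)
    (ηv γ : Fin M → ℝ) (hηv : ∀ i, 0 ≤ ηv i) (hγ : ∀ i, 0 ≤ γ i)
    (β : Fin M → ℝ → ℝ) (ν : ℝ → ℝ)
    (hβc : ∀ i, ContinuousOn (β i) (Set.Ici 0))
    (hβb : ∀ i, ∀ t ≥ (0:ℝ), β i t ∈ Set.Icc 0 βmax)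
    (hνc : ContinuousOn ν (Set.Ici 0))
    (hνb : ∀ t ≥ (0:ℝ), ν t ∈ Set.Icc 0 νmax)
    (S₀ E₀ R₀ : ℝ) (I₀ : Fin M → ℝ)
    (hS₀ : 0 ≤ S₀) (hE₀ : 0 ≤ E₀) (hI₀ : ∀ i, 0 ≤ I₀ i) (hR₀ : 0 ≤ R₀)
    (hsum : S₀ + E₀ + (∑ i, I₀ i) + R₀ = N) :
    ∃ (S E R : ℝ → ℝ) (I : Fin M → ℝ → ℝ),
      S 0 = S₀ ∧ E 0 = E₀ ∧ (∀ i, I i 0 = I₀ i) ∧ R 0 = R₀ ∧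
      ∀ t ≥ (0:ℝ),
        HasDerivAt S (μ * N - S t / N * (∑ i, β i t * I i t) - (ν t + μ) * S t) t ∧
        HasDerivAt E (S t / N * (∑ i, β i t * I i t) - ((∑ i, ηv i) + μ) * E t) t ∧
        (∀ i, HasDerivAt (I i) (ηv i * E t - (γ i + μ) * I i t) t) ∧
        HasDerivAt R ((∑ i, γ i * I i t) + ν t * S t - μ * R t) t := by
  classical
  have hη : 0 ≤ ∑ i, ηv i := Finset.sum_nonneg fun i _ => hηv i
  have hΓ : 0 ≤ ∑ i, γ i := Finset.sum_nonneg fun i _ => hγ i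
  have hMc : (0:ℝ) ≤ M := Nat.cast_nonneg M
  -- extended coefficient functions
  set β2 : Fin M → ℝ → ℝ := fun i s => β i (max s 0) with hβ2def
  set ν2 : ℝ → ℝ := fun s => ν (max s 0) with hν2def
  have hβ2b : ∀ i t, β2 i t ∈ Set.Icc 0 βmax := fun i t => hβb i _ (le_max_right _ _)
  have hν2b : ∀ t, ν2 t ∈ Set.Icc 0 νmax := fun t => hνb _ (le_max_right _ _)
  have hβ2c : ∀ i, Continuous (β2 i) := fun i =>
    (hβc i).comp_continuous (continuous_id.max continuous_const) fun t => Set.mem_Ici.mpr (le_max_right _ _)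
  have hν2c : Continuous ν2 :=
    hνc.comp_continuous (continuous_id.max continuous_const) fun t => Set.mem_Ici.mpr (le_max_right _ _)
  -- the global solution of the clamped system
  obtain ⟨X, hX0, hX⟩ := seir_ode_global (seirF M N μ ηv γ β2 ν2)
    (Real.toNNReal (2*M*βmax + νmax + (∑ i, ηv i) + (∑ i, γ i) + 2*μ))
    ((2*μ + M*βmax + νmax + (∑ i, ηv i) + (∑ i, γ i)) * N)
    (mul_nonneg (by positivity) hN.le)
    (seirF_lipschitz hN hμ hβmax hνmax hηv hγ hβ2b hν2b)
    (seirF_cont hβ2c hν2c)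
    (fun t x => seirF_bound hN hμ hβmax hνmax hηv hγ hβ2b hν2b t x)
    (S₀, E₀, R₀, I₀)
  set Y : ℝ → ℝ × ℝ × ℝ × (Fin M → ℝ) := fun t => seirF M N μ ηv γ β2 ν2 t (X t) with hYdef
  set Sf : ℝ → ℝ := fun t => (X t).1 with hSfdef
  set Ef : ℝ → ℝ := fun t => (X t).2.1 with hEfdef
  set Rf : ℝ → ℝ := fun t => (X t).2.2.1 with hRfdef
  set If : Fin M → ℝ → ℝ := fun i t => (X t).2.2.2 i with hIfdef
  -- derivatives of the components
  have hSd : ∀ t, HasDerivAt Sf ((Y t).1) t := fun t => seir_hasDerivAt_fst (hX t)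
  have hEd : ∀ t, HasDerivAt Ef ((Y t).2.1) t := fun t =>
    seir_hasDerivAt_fst (seir_hasDerivAt_snd (hX t))
  have hRd : ∀ t, HasDerivAt Rf ((Y t).2.2.1) t := fun t =>
    seir_hasDerivAt_fst (seir_hasDerivAt_snd (seir_hasDerivAt_snd (hX t)))
  have hId : ∀ i t, HasDerivAt (If i) ((Y t).2.2.2 i) t := fun i t =>
    hasDerivAt_pi.mp (seir_hasDerivAt_snd (seir_hasDerivAt_snd (seir_hasDerivAt_snd (hX t)))) i
  -- initial values
  have hS0' : Sf 0 = S₀ := by rw [hSfdef]; simp [hX0]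
  have hE0' : Ef 0 = E₀ := by rw [hEfdef]; simp [hX0]
  have hR0' : Rf 0 = R₀ := by rw [hRfdef]; simp [hX0]
  have hI0' : ∀ i, If i 0 = I₀ i := by intro i; rw [hIfdef]; simp [hX0]
  -- nonnegativity of sum term
  have hsum_nn : ∀ t, 0 ≤ ∑ i, β2 i t * seirCl N ((X t).2.2.2 i) :=
    fun t => Finset.sum_nonneg fun i _ => mul_nonneg (hβ2b i t).1 (seirCl_nonneg _ _)
  -- nonnegativity invariance
  have hSnn : ∀ t ≥ (0:ℝ), 0 ≤ Sf t := by
    refine seir_nonneg_invariant Sf (fun t => (Y t).1) hSd (hS0' ▸ hS₀) ?_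
    intro t ht hlt
    show 0 ≤ (seirF M N μ ηv γ β2 ν2 t (X t)).1
    simp only [seirF]
    rw [seirCl_of_nonpos hlt.le hN.le]
    simp
    positivity
  have hEnn : ∀ t ≥ (0:ℝ), 0 ≤ Ef t := by
    refine seir_nonneg_invariant Ef (fun t => (Y t).2.1) hEd (hE0' ▸ hE₀) ?_
    intro t ht hlt
    show 0 ≤ (seirF M N μ ηv γ β2 ν2 t (X t)).2.1
    simp only [seirF]
    rw [seirCl_of_nonpos hlt.le hN.le]
    rw [mul_zero, sub_zero]
    exact mul_nonneg (div_nonneg (seirCl_nonneg _ _) hN.le) (hsum_nn t)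
  have hInn : ∀ i, ∀ t ≥ (0:ℝ), 0 ≤ If i t := by
    intro i
    refine seir_nonneg_invariant (If i) (fun t => (Y t).2.2.2 i) (hId i) ((hI0' i) ▸ hI₀ i) ?_
    intro t ht hlt
    show 0 ≤ (seirF M N μ ηv γ β2 ν2 t (X t)).2.2.2 i
    simp only [seirF]
    rw [seirCl_of_nonpos hlt.le hN.le]
    rw [mul_zero, sub_zero]
    exact mul_nonneg (hηv i) (seirCl_nonneg _ _)
  have hRnn : ∀ t ≥ (0:ℝ), 0 ≤ Rf t := by
    refine seir_nonneg_invariant Rf (fun t => (Y t).2.2.1) hRd (hR0' ▸ hR₀) ?_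
    intro t ht hlt
    show 0 ≤ (seirF M N μ ηv γ β2 ν2 t (X t)).2.2.1
    simp only [seirF]
    rw [seirCl_of_nonpos hlt.le hN.le]
    rw [mul_zero, sub_zero]
    refine add_nonneg (Finset.sum_nonneg fun i _ => mul_nonneg (hγ i) (seirCl_nonneg _ _)) ?_
    exact mul_nonneg (hν2b t).1 (seirCl_nonneg _ _)
  -- sum invariance
  set g : ℝ → ℝ := fun t => Sf t + Ef t + (∑ i, If i t) + Rf t - N with hgdef
  set g' : ℝ → ℝ := fun t =>
    (Y t).1 + (Y t).2.1 + (∑ i, (Y t).2.2.2 i) + (Y t).2.2.1 with hg'def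
  have hgd : ∀ t, HasDerivAt g (g' t) t := by
    intro t
    exact ((((hSd t).add (hEd t)).add (HasDerivAt.fun_sum fun i _ => hId i t)).add (hRd t)).sub_const N
  have hg'val : ∀ t, g' t = μ * (N - (seirCl N (Sf t) + seirCl N (Ef t)
      + (∑ i, seirCl N (If i t)) + seirCl N (Rf t))) := by
    intro t
    show (seirF M N μ ηv γ β2 ν2 t (X t)).1 + (seirF M N μ ηv γ β2 ν2 t (X t)).2.1
      + (∑ i, (seirF M N μ ηv γ β2 ν2 t (X t)).2.2.2 i)
      + (seirF M N μ ηv γ β2 ν2 t (X t)).2.2.1 = _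
    simp only [seirF]
    have h1 : ∑ i, (ηv i * seirCl N ((X t).2.1) - (γ i + μ) * seirCl N ((X t).2.2.2 i))
        = (∑ i, ηv i) * seirCl N ((X t).2.1) - (∑ i, γ i * seirCl N ((X t).2.2.2 i))
          - μ * (∑ i, seirCl N ((X t).2.2.2 i)) := by
      rw [Finset.sum_sub_distrib, ← Finset.sum_mul]
      have h2 : ∑ i, (γ i + μ) * seirCl N ((X t).2.2.2 i)
          = (∑ i, γ i * seirCl N ((X t).2.2.2 i)) + μ * (∑ i, seirCl N ((X t).2.2.2 i)) := by
        rw [Finset.mul_sum, ← Finset.sum_add_distrib]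
        congr 1; ext i; ring
      rw [h2]; ring
    rw [h1]
    ring
  have hg0 : g 0 = 0 := by
    rw [hgdef]
    simp only [hS0', hE0', hR0']
    have : ∑ i, If i 0 = ∑ i, I₀ i := Finset.sum_congr rfl fun i _ => hI0' i
    rw [this]; linarith [hsum]
  have hgzero : ∀ t ≥ (0:ℝ), g t = 0 := by
    refine seir_zero_invariant g g' hgd hg0 ?_ ?_
    · -- g < 0 ⇒ g' ≥ 0
      intro t ht hlt
      have hS := hSnn t ht; have hE := hEnn t ht; have hR := hRnn t ht
      have hIs : ∀ i, 0 ≤ If i t := fun i => hInn i t ht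
      have hIsum : 0 ≤ ∑ i, If i t := Finset.sum_nonneg fun i _ => hIs i
      have htot : Sf t + Ef t + (∑ i, If i t) + Rf t < N := by
        have h : Sf t + Ef t + (∑ i, If i t) + Rf t - N < 0 := hlt
        linarith
      have hSle : Sf t ≤ N := by linarith
      have hEle : Ef t ≤ N := by linarith
      have hRle : Rf t ≤ N := by linarith
      have hIle : ∀ i, If i t ≤ N := by
        intro i
        have : If i t ≤ ∑ j, If j t := Finset.single_le_sum (fun j _ => hIs j) (Finset.mem_univ i)
        linarith
      rw [hg'val t, seirCl_eq_self hS hSle, seirCl_eq_self hE hEle, seirCl_eq_self hR hRle]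
      have : ∑ i, seirCl N (If i t) = ∑ i, If i t :=
        Finset.sum_congr rfl fun i _ => seirCl_eq_self (hIs i) (hIle i)
      rw [this]
      exact mul_nonneg hμ (by linarith)
    · -- g > 0 ⇒ g' ≤ 0
      intro t ht hlt
      have hS := hSnn t ht; have hE := hEnn t ht; have hR := hRnn t ht
      have hIs : ∀ i, 0 ≤ If i t := fun i => hInn i t ht
      have htot : N ≤ Sf t + Ef t + (∑ i, If i t) + Rf t := by
        have h : (0:ℝ) < Sf t + Ef t + (∑ i, If i t) + Rf t - N := hlt
        linarith
      rw [hg'val t]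
      refine mul_nonpos_of_nonneg_of_nonpos hμ (sub_nonpos.mpr ?_)
      have hclsum_nn : 0 ≤ ∑ i, seirCl N (If i t) :=
        Finset.sum_nonneg fun i _ => seirCl_nonneg _ _
      rcases lt_or_ge N (Sf t) with h | hSle
      · rw [seirCl_of_ge h.le hN.le]
        linarith [seirCl_nonneg N (Ef t), seirCl_nonneg N (Rf t)]
      rcases lt_or_ge N (Ef t) with h | hEle
      · rw [seirCl_of_ge h.le hN.le]
        linarith [seirCl_nonneg N (Sf t), seirCl_nonneg N (Rf t)]
      rcases lt_or_ge N (Rf t) with h | hRle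
      · rw [seirCl_of_ge h.le hN.le]
        linarith [seirCl_nonneg N (Sf t), seirCl_nonneg N (Ef t)]
      by_cases hIle : ∀ i, If i t ≤ N
      · rw [seirCl_eq_self hS hSle, seirCl_eq_self hE hEle, seirCl_eq_self hR hRle]
        have : ∑ i, seirCl N (If i t) = ∑ i, If i t :=
          Finset.sum_congr rfl fun i _ => seirCl_eq_self (hIs i) (hIle i)
        rw [this]; linarith
      · push_neg at hIle
        obtain ⟨j, hj⟩ := hIle
        have h1 : seirCl N (If j t) ≤ ∑ i, seirCl N (If i t) :=
          Finset.single_le_sum (fun (i : Fin M) _ => seirCl_nonneg N (If i t)) (Finset.mem_univ j)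
        rw [seirCl_of_ge hj.le hN.le] at h1
        linarith [seirCl_nonneg N (Sf t), seirCl_nonneg N (Ef t), seirCl_nonneg N (Rf t)]
  -- conclusion
  refine ⟨Sf, Ef, Rf, If, hS0', hE0', hI0', hR0', ?_⟩
  intro t ht
  have hS := hSnn t ht; have hE := hEnn t ht; have hR := hRnn t ht
  have hIs : ∀ i, 0 ≤ If i t := fun i => hInn i t ht
  have hIsum : 0 ≤ ∑ i, If i t := Finset.sum_nonneg fun i _ => hIs i
  have htot : Sf t + Ef t + (∑ i, If i t) + Rf t = N := by
    have h : Sf t + Ef t + (∑ i, If i t) + Rf t - N = 0 := hgzero t ht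
    linarith
  have hSle : Sf t ≤ N := by linarith
  have hEle : Ef t ≤ N := by linarith
  have hRle : Rf t ≤ N := by linarith
  have hIle : ∀ i, If i t ≤ N := by
    intro i
    have : If i t ≤ ∑ j, If j t := Finset.single_le_sum (fun j _ => hIs j) (Finset.mem_univ i)
    linarith
  have hclS : seirCl N ((X t).1) = Sf t := seirCl_eq_self hS hSle
  have hclE : seirCl N ((X t).2.1) = Ef t := seirCl_eq_self hE hEle
  have hclR : seirCl N ((X t).2.2.1) = Rf t := seirCl_eq_self hR hRle
  have hclI : ∀ i, seirCl N ((X t).2.2.2 i) = If i t := fun i => seirCl_eq_self (hIs i) (hIle i)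
  have hβ2t : ∀ i, β2 i t = β i t := fun i => by rw [hβ2def]; simp [max_eq_left ht]
  have hν2t : ν2 t = ν t := by rw [hν2def]; simp [max_eq_left ht]
  have hsumeq : (∑ i, β2 i t * seirCl N ((X t).2.2.2 i)) = ∑ i, β i t * If i t :=
    Finset.sum_congr rfl fun i _ => by rw [hβ2t i, hclI i]
  refine ⟨?_, ?_, ?_, ?_⟩
  · have h := hSd t
    have : (Y t).1 = μ * N - Sf t / N * (∑ i, β i t * If i t) - (ν t + μ) * Sf t := by
      show (seirF M N μ ηv γ β2 ν2 t (X t)).1 = _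
      simp only [seirF]
      rw [hclS, hν2t, hsumeq]
    rwa [this] at h
  · have h := hEd t
    have : (Y t).2.1 = Sf t / N * (∑ i, β i t * If i t) - ((∑ i, ηv i) + μ) * Ef t := by
      show (seirF M N μ ηv γ β2 ν2 t (X t)).2.1 = _
      simp only [seirF]
      rw [hclS, hclE, hsumeq]
    rwa [this] at h
  · intro i
    have h := hId i t
    have : (Y t).2.2.2 i = ηv i * Ef t - (γ i + μ) * If i t := by
      show (seirF M N μ ηv γ β2 ν2 t (X t)).2.2.2 i = _
      simp only [seirF]
      rw [hclE, hclI i]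
    rwa [this] at h
  · have h := hRd t
    have : (Y t).2.2.1 = (∑ i, γ i * If i t) + ν t * Sf t - μ * Rf t := by
      show (seirF M N μ ηv γ β2 ν2 t (X t)).2.2.1 = _
      simp only [seirF]
      rw [hclS, hclR, hν2t]
      congr 1
      exact congrArg₂ _ (Finset.sum_congr rfl fun i _ => by rw [hclI i]) rfl
    rwa [this] at h
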